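/- Let β : ℤ → ℂ be finitely supported and let h : (0,∞) → ℂ be measurable with ∫₀^∞ |h(ρ)| ρ dρ < ∞. Define the divergence free polar mother wavelet in the frequency domain by ψ̂(ξ) = −i (Σ_m β_m e^{i m θ_ξ}) h(|ξ|) e_θ(ξ), where e_θ(ξ) = (sin θ_ξ, −cos θ_ξ). Then its unitary inverse Fourier transform ψ(x) = (2π)^{−1} ∫_{ℝ²} ψ̂(ξ) e^{i⟨ξ,x⟩} dξ has, for every x ∈ ℝ² \ {0} with polar coordinates (|x|, θ_x), the closed form ψ(x) = (1/2) Σ_{σ ∈ {−1,+1}} Σ_m i^{m+σ} β_m e^{i(m+σ)θ_x} h_{m+σ}(|x|) · (−σ, i), where h_k(r) = ∫₀^∞ h(ρ) J_k(ρ r) ρ dρ and J_k(z) = (1/2π) ∫₀^{2π} e^{i(z sin φ − k φ)} dφ. -/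

import Mathlib

open MeasureTheory RealInnerProductSpace

/-- The Bessel function of the first kind of integer order `k`. -/
noncomputable def besselJ (k : ℤ) (z : ℝ) : ℂ :=
  (2 * Real.pi)⁻¹ • ∫ φ in (0 : ℝ)..(2 * Real.pi),
    Complex.exp (Complex.I * ((z * Real.sin φ - k * φ : ℝ) : ℂ))

/-- The order-`k` Hankel transform `h_k(r) = ∫₀^∞ h(ρ) J_k(ρr) ρ dρ` of a radial window. -/
noncomputable def hankel (h : ℝ → ℂ) (k : ℤ) (r : ℝ) : ℂ :=
  ∫ ρ in Set.Ioi (0 : ℝ), h ρ * besselJ k (ρ * r) * (ρ : ℂ)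

/-- The polar angle of a point in the plane. -/
noncomputable def polarAngle (v : EuclideanSpace ℝ (Fin 2)) : ℝ :=
  Complex.arg ((v 0 : ℂ) + (v 1 : ℂ) * Complex.I)

namespace Stmt11

lemma I_zpow (k : ℤ) :
    (Complex.I : ℂ) ^ k = Complex.exp ((k : ℂ) * (((Real.pi / 2 : ℝ) : ℂ) * Complex.I)) := by
  rw [Complex.exp_int_mul]
  congr 1
  rw [Complex.exp_mul_I, ← Complex.ofReal_cos, ← Complex.ofReal_sin,
    Real.cos_pi_div_two, Real.sin_pi_div_two]
  simp

noncomputable def besselInt (k : ℤ) (z : ℝ) : ℝ → ℂ := fun ψ =>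
  Complex.exp (Complex.I * ((z * Real.sin ψ - k * ψ : ℝ) : ℂ))

lemma besselInt_periodic (k : ℤ) (z : ℝ) :
    Function.Periodic (besselInt k z) (2 * Real.pi) := by
  intro ψ
  unfold besselInt
  rw [Real.sin_add_two_pi]
  rw [show Complex.I * ((z * Real.sin ψ - k * (ψ + 2 * Real.pi) : ℝ) : ℂ)
      = Complex.I * ((z * Real.sin ψ - k * ψ : ℝ) : ℂ) + (-k : ℤ) * (2 * Real.pi * Complex.I) by
    push_cast; ring]
  rw [Complex.exp_add, Complex.exp_int_mul_two_pi_mul_I, mul_one]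

lemma angular (k : ℤ) (z θ : ℝ) :
    (∫ φ in Set.Ioo (-Real.pi) Real.pi,
        Complex.exp (Complex.I * ((z * Real.cos (φ - θ) + k * φ : ℝ) : ℂ)))
      = ((2 * Real.pi : ℝ) : ℂ) *
          (Complex.I ^ k * Complex.exp (Complex.I * (k : ℂ) * (θ : ℂ)) * besselJ k z) := by
  have hπ : -Real.pi ≤ Real.pi := by linarith [Real.pi_pos]
  rw [← MeasureTheory.integral_Ioc_eq_integral_Ioo, ← intervalIntegral.integral_of_le hπ]
  have hpt : ∀ φ : ℝ, Complex.exp (Complex.I * ((z * Real.cos (φ - θ) + k * φ : ℝ) : ℂ))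
      = (Complex.I ^ k * Complex.exp (Complex.I * (k : ℂ) * (θ : ℂ))) *
          besselInt k z (θ + Real.pi / 2 - φ) := by
    intro φ
    unfold besselInt
    rw [show θ + Real.pi / 2 - φ = Real.pi / 2 - (φ - θ) by ring, Real.sin_pi_div_two_sub]
    rw [I_zpow, mul_assoc, ← Complex.exp_add, ← Complex.exp_add]
    congr 1
    push_cast
    ring
  simp_rw [hpt]
  rw [intervalIntegral.integral_const_mul]
  rw [intervalIntegral.integral_comp_sub_left (besselInt k z) (θ + Real.pi / 2)]
  rw [show θ + Real.pi / 2 - -Real.pi = (θ + Real.pi / 2 - Real.pi) + 2 * Real.pi by ring]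
  rw [(besselInt_periodic k z).intervalIntegral_add_eq (θ + Real.pi / 2 - Real.pi) 0, zero_add]
  have hJ : (∫ ψ in (0:ℝ)..(2 * Real.pi), besselInt k z ψ)
      = ((2 * Real.pi : ℝ) : ℂ) * besselJ k z := by
    rw [besselJ, Complex.real_smul]
    rw [← mul_assoc, ← Complex.ofReal_mul]
    rw [mul_inv_cancel₀ (by positivity : (2 * Real.pi : ℝ) ≠ 0)]
    simp [besselInt]
  rw [hJ]
  ring

lemma norm_exp_I_mul (t : ℝ) : ‖Complex.exp (Complex.I * (t : ℂ))‖ = 1 := by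
  rw [mul_comm, Complex.norm_exp_ofReal_mul_I]

lemma key (h : ℝ → ℂ) (hmeas : Measurable h)
    (hint : IntegrableOn (fun ρ : ℝ => ‖h ρ‖ * ρ) (Set.Ioi (0 : ℝ)))
    (x : EuclideanSpace ℝ (Fin 2)) (hx : x ≠ 0) (k : ℤ) :
    Integrable (fun ξ : EuclideanSpace ℝ (Fin 2) =>
        Complex.exp (Complex.I * ((⟪ξ, x⟫ : ℝ) : ℂ)) *
          Complex.exp (Complex.I * (k : ℂ) * ((polarAngle ξ : ℝ) : ℂ)) * h ‖ξ‖) ∧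
      (∫ ξ : EuclideanSpace ℝ (Fin 2),
          Complex.exp (Complex.I * ((⟪ξ, x⟫ : ℝ) : ℂ)) *
            Complex.exp (Complex.I * (k : ℂ) * ((polarAngle ξ : ℝ) : ℂ)) * h ‖ξ‖)
        = ((2 * Real.pi : ℝ) : ℂ) *
            (Complex.I ^ k * Complex.exp (Complex.I * (k : ℂ) * ((polarAngle x : ℝ) : ℂ)) *
              hankel h k ‖x‖) := by
  have hr : 0 < ‖x‖ := norm_pos_iff.mpr hx
  set r : ℝ := ‖x‖ with hrdef
  set θ : ℝ := polarAngle x with hθdef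
  have hnorm : ∀ ξ : EuclideanSpace ℝ (Fin 2),
      ‖ξ‖ = ‖(ξ 0 : ℂ) + (ξ 1 : ℂ) * Complex.I‖ := by
    intro ξ
    rw [EuclideanSpace.norm_eq, Complex.norm_def, Complex.normSq_add_mul_I, Fin.sum_univ_two]
    simp [Real.norm_eq_abs, sq_abs]
  have hw : ((x 0 : ℂ) + (x 1 : ℂ) * Complex.I) ≠ 0 := by
    intro h0
    rw [hrdef, hnorm x, h0] at hr
    simp at hr
  have habs : ‖(x 0 : ℂ) + (x 1 : ℂ) * Complex.I‖ = r := (hnorm x).symm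
  have hre : ((x 0 : ℂ) + (x 1 : ℂ) * Complex.I).re = x 0 := by simp
  have him : ((x 0 : ℂ) + (x 1 : ℂ) * Complex.I).im = x 1 := by simp
  have hx0 : x 0 = r * Real.cos θ := by
    rw [hθdef, polarAngle, Complex.cos_arg hw, hre, habs]
    field_simp
  have hx1 : x 1 = r * Real.sin θ := by
    rw [hθdef, polarAngle, Complex.sin_arg, him, habs]
    field_simp
  have hinner : ∀ ξ : EuclideanSpace ℝ (Fin 2), (⟪ξ, x⟫ : ℝ) = ξ 0 * x 0 + ξ 1 * x 1 := by
    intro ξ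
    simp [PiLp.inner_apply, Fin.sum_univ_two, RCLike.inner_apply, starRingEnd_apply]
    ring
  set EE : EuclideanSpace ℝ (Fin 2) ≃ᵐ ℝ × ℝ :=
    (MeasurableEquiv.toLp 2 (Fin 2 → ℝ)).symm.trans MeasurableEquiv.finTwoArrow with hEE
  have hmpEE : MeasurePreserving EE volume volume :=
    (volume_preserving_finTwoArrow ℝ).comp
      (EuclideanSpace.volume_preserving_symm_measurableEquiv_toLp (Fin 2))
  have hmp : MeasurePreserving (EE.symm) volume volume := MeasurePreserving.symm EE hmpEE
  have hcomp0 : ∀ p : ℝ × ℝ, (EE.symm p) 0 = p.1 := fun p => rfl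
  have hcomp1 : ∀ p : ℝ × ℝ, (EE.symm p) 1 = p.2 := fun p => rfl
  set G : EuclideanSpace ℝ (Fin 2) → ℂ := fun ξ =>
    Complex.exp (Complex.I * ((⟪ξ, x⟫ : ℝ) : ℂ)) *
      Complex.exp (Complex.I * (k : ℂ) * ((polarAngle ξ : ℝ) : ℂ)) * h ‖ξ‖ with hG
  set F : ℝ × ℝ → ℂ := fun p =>
    Complex.exp (Complex.I * ((p.1 * x 0 + p.2 * x 1 : ℝ) : ℂ)) *
      Complex.exp (Complex.I * (k : ℂ) *
        ((Complex.arg ((p.1 : ℂ) + (p.2 : ℂ) * Complex.I) : ℝ) : ℂ)) *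
      h ‖(p.1 : ℂ) + (p.2 : ℂ) * Complex.I‖ with hF
  have hGF : G ∘ EE.symm = F := by
    funext p
    simp only [hG, hF, Function.comp_apply, polarAngle, hinner, hcomp0, hcomp1, hnorm]
  set T : ℝ × ℝ → ℂ := fun p =>
    (p.1 : ℂ) * h p.1 *
      Complex.exp (Complex.I * ((p.1 * r * Real.cos (p.2 - θ) + k * p.2 : ℝ) : ℂ)) with hTdef
  have hTmeas : Measurable T := by
    have hcont : Measurable fun p : ℝ × ℝ => p.1 * r * Real.cos (p.2 - θ) + (k : ℝ) * p.2 :=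
      ((measurable_fst.mul_const r).mul
        (Real.measurable_cos.comp (measurable_snd.sub_const θ))).add
        (measurable_snd.const_mul _)
    exact ((Complex.measurable_ofReal.comp measurable_fst).mul
        (hmeas.comp measurable_fst)).mul
      (Complex.measurable_exp.comp
        ((Complex.measurable_ofReal.comp hcont).const_mul Complex.I))
  have hboundInt : IntegrableOn (fun p : ℝ × ℝ => ‖h p.1‖ * p.1) polarCoord.target := by
    rw [polarCoord_target, IntegrableOn, Measure.volume_eq_prod, ← Measure.prod_restrict]
    have h2 : Integrable (fun _ : ℝ => (1 : ℝ))
        (volume.restrict (Set.Ioo (-Real.pi) Real.pi)) :=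
      integrableOn_const measure_Ioo_lt_top.ne
    simpa using hint.mul_prod h2
  have hTint : IntegrableOn T polarCoord.target := by
    apply Integrable.mono hboundInt hTmeas.aestronglyMeasurable
    filter_upwards [ae_restrict_mem polarCoord.open_target.measurableSet] with p hp
    rw [polarCoord_target, Set.mem_prod] at hp
    obtain ⟨hρ, -⟩ := hp
    rw [Set.mem_Ioi] at hρ
    have h1 : ‖T p‖ = p.1 * ‖h p.1‖ := by
      rw [hTdef]
      simp only [norm_mul, norm_exp_I_mul, Complex.norm_real, Real.norm_eq_abs, mul_one,
        abs_of_pos hρ]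
    rw [h1, Real.norm_eq_abs, abs_of_nonneg (by positivity), mul_comm]
  have hTF : ∀ p ∈ polarCoord.target, p.1 • F (polarCoord.symm p) = T p := by
    rintro ⟨ρ, φ⟩ hp
    rw [polarCoord_target, Set.mem_prod] at hp
    obtain ⟨hρ, hφ⟩ := hp
    rw [Set.mem_Ioi] at hρ
    rw [Set.mem_Ioo] at hφ
    obtain ⟨hφ1, hφ2⟩ := hφ
    have hmulform : ((ρ * Real.cos φ : ℝ) : ℂ) + ((ρ * Real.sin φ : ℝ) : ℂ) * Complex.I
        = (ρ : ℂ) * ((Real.cos φ : ℝ) + (Real.sin φ : ℝ) * Complex.I) := by push_cast; ring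
    have harg : Complex.arg (((ρ * Real.cos φ : ℝ) : ℂ) + ((ρ * Real.sin φ : ℝ) : ℂ) * Complex.I)
        = φ := by
      rw [hmulform, Complex.arg_real_mul _ hρ, Complex.ofReal_cos, Complex.ofReal_sin]
      exact Complex.arg_cos_add_sin_mul_I ⟨hφ1, hφ2.le⟩
    have habs2 : ‖
        ((ρ * Real.cos φ : ℝ) : ℂ) + ((ρ * Real.sin φ : ℝ) : ℂ) * Complex.I‖ = ρ := by
      rw [hmulform, norm_mul, Complex.norm_real, Real.norm_eq_abs, Complex.ofReal_cos, Complex.ofReal_sin,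
        Complex.norm_cos_add_sin_mul_I, abs_of_pos hρ, mul_one]
    have hreal : ρ * Real.cos φ * x 0 + ρ * Real.sin φ * x 1 = ρ * r * Real.cos (φ - θ) := by
      rw [hx0, hx1, Real.cos_sub]; ring
    rw [hF, hTdef]
    simp only [polarCoord_symm_apply]
    rw [harg, habs2, hreal, Complex.real_smul]
    rw [show Complex.exp (Complex.I * ((ρ * r * Real.cos (φ - θ) + k * φ : ℝ) : ℂ))
        = Complex.exp (Complex.I * ((ρ * r * Real.cos (φ - θ) : ℝ) : ℂ)) *
          Complex.exp (Complex.I * (k : ℂ) * (φ : ℂ)) by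
      rw [← Complex.exp_add]; congr 1; push_cast; ring]
    ring
  set Bmat : ℝ × ℝ → (ℝ × ℝ) →L[ℝ] (ℝ × ℝ) := fun p =>
    LinearMap.toContinuousLinearMap (Matrix.toLin (Module.Basis.finTwoProd ℝ) (Module.Basis.finTwoProd ℝ)
      !![Real.cos p.2, -p.1 * Real.sin p.2; Real.sin p.2, p.1 * Real.cos p.2]) with hB
  have hdet : ∀ p : ℝ × ℝ, (Bmat p).det = p.1 := by
    intro p
    conv_rhs => rw [← one_mul p.1, ← Real.cos_sq_add_sin_sq p.2]
    simp only [hB, neg_mul, LinearMap.det_toContinuousLinearMap, LinearMap.det_toLin,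
      Matrix.det_fin_two_of, sub_neg_eq_add]
    ring
  have hFint : Integrable F := by
    have hinj : Set.InjOn polarCoord.symm polarCoord.target := by
      have h1 := polarCoord.symm.injOn
      rwa [OpenPartialHomeomorph.symm_source] at h1
    have hiff := integrableOn_image_iff_integrableOn_abs_det_fderiv_smul volume
      polarCoord.open_target.measurableSet
      (fun p _ => (hasFDerivAt_polarCoord_symm p).hasFDerivWithinAt) hinj F
    rw [polarCoord.symm_image_target_eq_source] at hiff
    have hsrc : IntegrableOn F polarCoord.source := by
      rw [hiff]
      refine hTint.congr_fun ?_ polarCoord.open_target.measurableSet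
      intro p hp
      rw [← hTF p hp]
      show p.1 • F (polarCoord.symm p) = |(Bmat p).det| • F (polarCoord.symm p)
      rw [polarCoord_target, Set.mem_prod, Set.mem_Ioi] at hp
      rw [hdet p, abs_of_pos hp.1]
    rw [← integrableOn_univ]
    exact hsrc.congr_set_ae polarCoord_source_ae_eq_univ.symm
  have hval : (∫ p, F p) = ((2 * Real.pi : ℝ) : ℂ) *
      (Complex.I ^ k * Complex.exp (Complex.I * (k : ℂ) * (θ : ℂ)) * hankel h k r) := by
    rw [← integral_comp_polarCoord_symm F]
    rw [setIntegral_congr_fun polarCoord.open_target.measurableSet hTF]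
    rw [polarCoord_target, IntegrableOn, Measure.volume_eq_prod] at hTint
    rw [polarCoord_target, Measure.volume_eq_prod]
    rw [setIntegral_prod T hTint]
    have hin : Set.EqOn (fun ρ => ∫ φ in Set.Ioo (-Real.pi) Real.pi, T (ρ, φ))
        (fun ρ => (((2 * Real.pi : ℝ) : ℂ) *
            (Complex.I ^ k * Complex.exp (Complex.I * (k : ℂ) * (θ : ℂ)))) *
          (h ρ * besselJ k (ρ * r) * (ρ : ℂ))) (Set.Ioi 0) := by
      intro ρ _
      have hTfun : (fun φ => T (ρ, φ)) = fun φ => ((ρ : ℂ) * h ρ) *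
          Complex.exp (Complex.I * ((ρ * r * Real.cos (φ - θ) + k * φ : ℝ) : ℂ)) := by
        funext φ
        rw [hTdef]
      show (∫ φ in Set.Ioo (-Real.pi) Real.pi, T (ρ, φ)) = _
      rw [hTfun, MeasureTheory.integral_const_mul, angular k (ρ * r) θ]
      ring
    rw [setIntegral_congr_fun measurableSet_Ioi hin, MeasureTheory.integral_const_mul, hankel]
    ring
  have hGint : Integrable G :=
    (hmp.integrable_comp_emb EE.symm.measurableEmbedding).mp (by rw [hGF]; exact hFint)
  have hGval : (∫ ξ, G ξ) = ∫ p, F p := by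
    rw [← hmp.integral_comp EE.symm.measurableEmbedding G]
    exact integral_congr_ae (Filter.Eventually.of_forall fun p => congrFun hGF p)
  exact ⟨hGint, by rw [hGval, hval]⟩

lemma exp_euler (t : ℝ) : Complex.exp (Complex.I * (t : ℂ))
    = Complex.cos (t : ℂ) + Complex.sin (t : ℂ) * Complex.I := by
  rw [mul_comm, Complex.exp_mul_I]

lemma exp_euler_neg (t : ℝ) : Complex.exp (-(Complex.I * (t : ℂ)))
    = Complex.cos (t : ℂ) - Complex.sin (t : ℂ) * Complex.I := by
  rw [show -(Complex.I * (t : ℂ)) = (-(t : ℂ)) * Complex.I by ring, Complex.exp_mul_I,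
    Complex.cos_neg, Complex.sin_neg]
  ring

lemma pointwise (β : ℤ →₀ ℂ) (h : ℝ → ℂ) (x : EuclideanSpace ℝ (Fin 2))
    (ξ : EuclideanSpace ℝ (Fin 2)) :
    Complex.exp (Complex.I * ((⟪ξ, x⟫ : ℝ) : ℂ)) •
        (((-Complex.I) *
            (∑ m ∈ β.support, β m * Complex.exp (Complex.I * (m : ℂ) * ((polarAngle ξ : ℝ) : ℂ))) *
            h ‖ξ‖) •
          ![((Real.sin (polarAngle ξ) : ℝ) : ℂ), ((-Real.cos (polarAngle ξ) : ℝ) : ℂ)])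
      = ∑ σ ∈ ({-1, 1} : Finset ℤ), ∑ m ∈ β.support,
          (((1 : ℂ) / 2 * β m) *
            (Complex.exp (Complex.I * ((⟪ξ, x⟫ : ℝ) : ℂ)) *
              Complex.exp (Complex.I * ((m + σ : ℤ) : ℂ) * ((polarAngle ξ : ℝ) : ℂ)) * h ‖ξ‖)) •
          ![(-(σ : ℤ) : ℂ), Complex.I] := by
  rw [Finset.sum_pair (by decide : (-1 : ℤ) ≠ 1)]
  funext i
  set θ : ℝ := polarAngle ξ with hθ
  set A : ℂ := Complex.exp (Complex.I * ((⟪ξ, x⟫ : ℝ) : ℂ)) with hA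
  set H : ℂ := h ‖ξ‖ with hH
  fin_cases i <;>
  · simp only [Pi.add_apply, Pi.smul_apply, Finset.sum_apply, Fin.zero_eta, Fin.mk_one,
      Matrix.cons_val_zero, Matrix.cons_val_one, Matrix.head_cons, smul_eq_mul]
    simp only [Finset.mul_sum, Finset.sum_mul]
    rw [← Finset.sum_add_distrib]
    refine Finset.sum_congr rfl fun m _ => ?_
    have e1 : Complex.exp (Complex.I * ((m + 1 : ℤ) : ℂ) * (θ : ℂ))
        = Complex.exp (Complex.I * (m : ℂ) * (θ : ℂ)) * Complex.exp (Complex.I * (θ : ℂ)) := by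
      rw [← Complex.exp_add]
      congr 1
      push_cast
      ring
    have e2 : Complex.exp (Complex.I * ((m + -1 : ℤ) : ℂ) * (θ : ℂ))
        = Complex.exp (Complex.I * (m : ℂ) * (θ : ℂ)) *
            Complex.exp (-(Complex.I * (θ : ℂ))) := by
      rw [← Complex.exp_add]
      congr 1
      push_cast
      ring
    rw [e1, e2, exp_euler, exp_euler_neg]
    simp only [Complex.ofReal_sin, Complex.ofReal_neg, Complex.ofReal_cos]
    push_cast
    ring

end Stmt11

/-- Closed form of the spatial representation of the divergence free polar mother wavelet
`ψ̂(ξ) = -i (∑_m β_m e^{imθ_ξ}) h(|ξ|) e_θ(ξ)` with `e_θ(ξ) = (sin θ_ξ, -cos θ_ξ)`. -/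
theorem stmt_11 (β : ℤ →₀ ℂ) (h : ℝ → ℂ) (hmeas : Measurable h)
    (hint : IntegrableOn (fun ρ : ℝ => ‖h ρ‖ * ρ) (Set.Ioi (0 : ℝ)))
    (ψhat : EuclideanSpace ℝ (Fin 2) → Fin 2 → ℂ)
    (hψhat : ∀ ξ, ψhat ξ =
      ((-Complex.I) *
          (∑ m ∈ β.support, β m * Complex.exp (Complex.I * (m : ℂ) * ((polarAngle ξ : ℝ) : ℂ))) *
          h ‖ξ‖) •
        ![((Real.sin (polarAngle ξ) : ℝ) : ℂ), ((-Real.cos (polarAngle ξ) : ℝ) : ℂ)])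
    (x : EuclideanSpace ℝ (Fin 2)) (hx : x ≠ 0) :
    (2 * Real.pi)⁻¹ • ∫ ξ : EuclideanSpace ℝ (Fin 2),
        Complex.exp (Complex.I * ((⟪ξ, x⟫ : ℝ) : ℂ)) • ψhat ξ
      = (1 / 2 : ℂ) • ∑ σ ∈ ({-1, 1} : Finset ℤ), ∑ m ∈ β.support,
          (Complex.I ^ (m + σ) * β m *
              Complex.exp (Complex.I * ((m + σ : ℤ) : ℂ) * ((polarAngle x : ℝ) : ℂ)) *
              hankel h (m + σ) ‖x‖) •
            ![(-(σ : ℤ) : ℂ), Complex.I] := by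
  classical
  have hkey := fun k : ℤ => Stmt11.key h hmeas hint x hx k
  have hpt : ∀ ξ : EuclideanSpace ℝ (Fin 2),
      Complex.exp (Complex.I * ((⟪ξ, x⟫ : ℝ) : ℂ)) • ψhat ξ
        = ∑ σ ∈ ({-1, 1} : Finset ℤ), ∑ m ∈ β.support,
            (((1 : ℂ) / 2 * β m) *
              (Complex.exp (Complex.I * ((⟪ξ, x⟫ : ℝ) : ℂ)) *
                Complex.exp (Complex.I * ((m + σ : ℤ) : ℂ) * ((polarAngle ξ : ℝ) : ℂ)) *
                h ‖ξ‖)) •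
            ![(-(σ : ℤ) : ℂ), Complex.I] := by
    intro ξ
    rw [hψhat ξ]
    exact Stmt11.pointwise β h x ξ
  simp only [hpt]
  have hatom : ∀ (σ m : ℤ), Integrable (fun ξ : EuclideanSpace ℝ (Fin 2) =>
      (((1 : ℂ) / 2 * β m) *
        (Complex.exp (Complex.I * ((⟪ξ, x⟫ : ℝ) : ℂ)) *
          Complex.exp (Complex.I * ((m + σ : ℤ) : ℂ) * ((polarAngle ξ : ℝ) : ℂ)) * h ‖ξ‖)) •
      ![(-(σ : ℤ) : ℂ), Complex.I]) := by
    intro σ m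
    exact ((hkey (m + σ)).1.const_mul _).smul_const _
  rw [integral_finset_sum _ (fun σ _ => integrable_finset_sum _ (fun m _ => hatom σ m))]
  have hswap : ∀ σ ∈ ({-1, 1} : Finset ℤ),
      (∫ ξ : EuclideanSpace ℝ (Fin 2), ∑ m ∈ β.support,
          (((1 : ℂ) / 2 * β m) *
            (Complex.exp (Complex.I * ((⟪ξ, x⟫ : ℝ) : ℂ)) *
              Complex.exp (Complex.I * ((m + σ : ℤ) : ℂ) * ((polarAngle ξ : ℝ) : ℂ)) * h ‖ξ‖)) •
          ![(-(σ : ℤ) : ℂ), Complex.I])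
        = ∑ m ∈ β.support, ((1 : ℂ) / 2 * β m *
            (((2 * Real.pi : ℝ) : ℂ) * (Complex.I ^ (m + σ) *
              Complex.exp (Complex.I * ((m + σ : ℤ) : ℂ) * ((polarAngle x : ℝ) : ℂ)) *
              hankel h (m + σ) ‖x‖))) • ![(-(σ : ℤ) : ℂ), Complex.I] := by
    intro σ _
    rw [integral_finset_sum _ (fun m _ => hatom σ m)]
    refine Finset.sum_congr rfl fun m _ => ?_
    rw [integral_smul_const, MeasureTheory.integral_const_mul, (hkey (m + σ)).2]
  rw [Finset.sum_congr rfl hswap]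
  rw [Finset.smul_sum, Finset.smul_sum]
  refine Finset.sum_congr rfl fun σ _ => ?_
  rw [Finset.smul_sum, Finset.smul_sum]
  refine Finset.sum_congr rfl fun m _ => ?_
  rw [← smul_assoc, ← smul_assoc]
  congr 1
  rw [smul_eq_mul, Complex.real_smul]
  push_cast
  have hπ : ((Real.pi : ℝ) : ℂ) ≠ 0 := by
    exact_mod_cast Real.pi_ne_zero
  field_simp
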